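/- The quaternionic Zak transform of a modulated and translated window satisfies Z_q^α(M_{k/α} T_{αn} g)(x, ω) = exp(−2πj α n₂ω₂) exp(2πj k₂x₂/α) · Z_q^α g(x, ω) · exp(2πi k₁x₁/α) exp(−2πi α n₁ω₁) for all k, n ∈ ℤ² and x, ω ∈ ℝ². -/

import Mathlib

open MeasureTheory Real
noncomputable section
abbrev ℍ : Type := Quaternion ℝ
/-- `exp(i t) = cos t + i sin t` as a quaternion. -/
def eqi (t : ℝ) : ℍ := ⟨Real.cos t, Real.sin t, 0, 0⟩
/-- `exp(j t) = cos t + j sin t` as a quaternion. -/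
def eqj (t : ℝ) : ℍ := ⟨Real.cos t, 0, Real.sin t, 0⟩
/-- Translation operator. -/
def Tr (b : ℝ × ℝ) (g : ℝ × ℝ → ℍ) : ℝ × ℝ → ℍ := fun x => g (x.1 - b.1, x.2 - b.2)
/-- Two-sided modulation operator. -/
def Mo (ω : ℝ × ℝ) (g : ℝ × ℝ → ℍ) : ℝ × ℝ → ℍ :=
  fun x => eqj (2 * π * ω.2 * x.2) * g x * eqi (2 * π * ω.1 * x.1)
/-- The quaternionic Zak transform. -/
def Zak (α : ℝ) (f : ℝ × ℝ → ℍ) (x ω : ℝ × ℝ) : ℍ :=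
  ∑' m : ℤ × ℤ, eqj (2 * π * α * m.2 * ω.2) * f (x.1 - α * m.1, x.2 - α * m.2) *
    eqi (2 * π * α * m.1 * ω.1)
/-- The symmetric real scalar product on `L²(ℝ², ℍ)`. -/
def rip (f g : ℝ × ℝ → ℍ) : ℝ := (∫ x : ℝ × ℝ, f x * star (g x)).re
/-- The cube `Q_α = [0,α]²`. -/
def QA (α : ℝ) : Set (ℝ × ℝ) := Set.Icc 0 α ×ˢ Set.Icc 0 α
/-- `‖f‖₂²` on `ℝ²`. -/
def n2sq (f : ℝ × ℝ → ℍ) : ℝ := ∫ x : ℝ × ℝ, ‖f x‖ ^ 2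

lemma eqi_add (s t : ℝ) : eqi (s + t) = eqi s * eqi t := by
  apply Quaternion.ext <;> simp only [Quaternion.re_mul, Quaternion.imI_mul, Quaternion.imJ_mul,
    Quaternion.imK_mul] <;> simp [eqi, Real.cos_add, Real.sin_add] <;> ring

lemma eqj_add (s t : ℝ) : eqj (s + t) = eqj s * eqj t := by
  apply Quaternion.ext <;> simp only [Quaternion.re_mul, Quaternion.imI_mul, Quaternion.imJ_mul,
    Quaternion.imK_mul] <;> simp [eqj, Real.cos_add, Real.sin_add] <;> ring

lemma eqi_int (t : ℝ) (m : ℤ) : eqi (t + m * (2 * π)) = eqi t := by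
  simp [eqi, Real.cos_add_int_mul_two_pi, Real.sin_add_int_mul_two_pi]
  rfl

lemma eqj_int (t : ℝ) (m : ℤ) : eqj (t + m * (2 * π)) = eqj t := by
  simp [eqj, Real.cos_add_int_mul_two_pi, Real.sin_add_int_mul_two_pi]
  rfl

lemma master (a b d e f h p q r s : ℝ) (c : ℍ) (m1 m2 : ℤ)
    (H2 : a + b = f + h + p + m2 * (2 * π)) (H1 : d + e = q + r + s + m1 * (2 * π)) :
    eqj a * (eqj b * c * eqi d) * eqi e
      = (eqj f * eqj h) * (eqj p * c * eqi q) * (eqi r * eqi s) := by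
  have L : eqj a * (eqj b * c * eqi d) * eqi e = eqj (a + b) * c * eqi (d + e) := by
    rw [eqj_add, eqi_add]; simp [mul_assoc]
  have R : (eqj f * eqj h) * (eqj p * c * eqi q) * (eqi r * eqi s)
      = eqj (f + h + p) * c * eqi (q + r + s) := by
    rw [eqj_add, eqj_add, eqi_add, eqi_add]; simp [mul_assoc]
  rw [L, R, H1, H2, eqj_int, eqi_int]

theorem zak_of_mod_trans (α : ℝ) (hα : 0 < α) (g : ℝ × ℝ → ℝ) (k n : ℤ × ℤ) (x ω : ℝ × ℝ) :
    Zak α (Mo ((k.1 : ℝ) / α, (k.2 : ℝ) / α)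
        (Tr (α * n.1, α * n.2) fun y => ((g y : ℝ) : ℍ))) x ω
      = eqj (-(2 * π * α * n.2 * ω.2)) * eqj (2 * π * k.2 * x.2 / α) *
          Zak α (fun y => ((g y : ℝ) : ℍ)) x ω *
          eqi (2 * π * k.1 * x.1 / α) * eqi (-(2 * π * α * n.1 * ω.1)) := by
  have hα' : α ≠ 0 := hα.ne'
  set F : ℤ × ℤ → ℍ := fun m =>
    eqj (2 * π * α * m.2 * ω.2) * ((g (x.1 - α * m.1, x.2 - α * m.2) : ℝ) : ℍ) *
      eqi (2 * π * α * m.1 * ω.1) with hF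
  have step1 : Zak α (Mo ((k.1 : ℝ) / α, (k.2 : ℝ) / α)
        (Tr (α * n.1, α * n.2) fun y => ((g y : ℝ) : ℍ))) x ω
      = ∑' m : ℤ × ℤ, (eqj (-(2 * π * α * n.2 * ω.2)) * eqj (2 * π * k.2 * x.2 / α))
          * F (m + n) * (eqi (2 * π * k.1 * x.1 / α) * eqi (-(2 * π * α * n.1 * ω.1))) := by
    rw [Zak]
    refine tsum_congr fun m => ?_
    simp only [Mo, Tr, hF]
    have hg1 : x.1 - α * (m.1 : ℝ) - α * (n.1 : ℝ) = x.1 - α * (((m + n).1 : ℤ) : ℝ) := by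
      simp only [Prod.fst_add]; push_cast; ring
    have hg2 : x.2 - α * (m.2 : ℝ) - α * (n.2 : ℝ) = x.2 - α * (((m + n).2 : ℤ) : ℝ) := by
      simp only [Prod.snd_add]; push_cast; ring
    rw [hg1, hg2]
    refine master _ _ _ _ _ _ _ _ _ _ _ (-(k.1 * m.1)) (-(k.2 * m.2)) ?_ ?_
    · simp only [Prod.fst_add, Prod.snd_add]; push_cast; field_simp; ring
    · simp only [Prod.fst_add, Prod.snd_add]; push_cast; field_simp; ring
  have hsum := (Equiv.addRight n).tsum_eq F
  simp only [Equiv.coe_addRight] at hsum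
  rw [step1, tsum_mul_right, tsum_mul_left, hsum, Zak]
  simp only [hF, mul_assoc]
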